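/- For r ∈ (0,1), ∫_{−π/2}^{π/2} cos φ · ln( r cos φ + √(1 − r² sin²φ) ) dφ = ln(1 − r²) + (2/r)(K(r) − E(r)), where K and E are the complete elliptic integrals of the first and second kind. -/

import Mathlib

open Real

/-- The complete elliptic integral of the second kind. -/
noncomputable def ellipticE (k : ℝ) : ℝ :=
  ∫ θ in (0:ℝ)..(π / 2), Real.sqrt (1 - k ^ 2 * (sin θ) ^ 2)

/-- The complete elliptic integral of the first kind. -/
noncomputable def ellipticK (k : ℝ) : ℝ :=
  ∫ θ in (0:ℝ)..(π / 2), 1 / Real.sqrt (1 - k ^ 2 * (sin θ) ^ 2)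

section aux

variable {r : ℝ}

lemma g_pos (hr : r ∈ Set.Ioo (0:ℝ) 1) (φ : ℝ) : 0 < 1 - r ^ 2 * (sin φ) ^ 2 := by
  obtain ⟨h0, h1⟩ := hr
  nlinarith [sin_sq_le_one φ, sq_nonneg (sin φ), sq_nonneg r]

lemma sqrt_g_pos (hr : r ∈ Set.Ioo (0:ℝ) 1) (φ : ℝ) :
    0 < Real.sqrt (1 - r ^ 2 * (sin φ) ^ 2) := Real.sqrt_pos.2 (g_pos hr φ)

lemma cont_sqrt_g (_hr : r ∈ Set.Ioo (0:ℝ) 1) :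
    Continuous fun φ : ℝ => Real.sqrt (1 - r ^ 2 * (sin φ) ^ 2) := by
  fun_prop

lemma cont_inner (hr : r ∈ Set.Ioo (0:ℝ) 1) :
    Continuous fun φ : ℝ => (sin φ) ^ 2 / Real.sqrt (1 - r ^ 2 * (sin φ) ^ 2) := by
  apply Continuous.div (by fun_prop) (cont_sqrt_g hr)
  exact fun φ => (sqrt_g_pos hr φ).ne'

/-- derivative of the sqrt part -/
lemma hasDerivAt_sqrt_g (hr : r ∈ Set.Ioo (0:ℝ) 1) (φ : ℝ) :
    HasDerivAt (fun x => Real.sqrt (1 - r ^ 2 * (sin x) ^ 2))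
      (-(r ^ 2 * sin φ * cos φ) / Real.sqrt (1 - r ^ 2 * (sin φ) ^ 2)) φ := by
  have hg : HasDerivAt (fun x : ℝ => 1 - r ^ 2 * (sin x) ^ 2)
      (-(r ^ 2 * (2 * sin φ * cos φ))) φ := by
    have h1 : HasDerivAt (fun x : ℝ => (sin x) ^ 2) (2 * sin φ * cos φ) φ := by
      have := ((hasDerivAt_sin φ).pow 2)
      exact this.congr_deriv (by simp)
    simpa using ((h1.const_mul (r ^ 2)).const_sub 1)
  have := (Real.hasDerivAt_sqrt (g_pos hr φ).ne').comp φ hg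
  refine this.congr_deriv ?_
  have h2 : Real.sqrt (1 - r ^ 2 * (sin φ) ^ 2) ≠ 0 := (sqrt_g_pos hr φ).ne'
  field_simp

lemma hasDerivAt_L (hr : r ∈ Set.Ioo (0:ℝ) 1) (φ : ℝ) (hφ : 0 ≤ cos φ) :
    HasDerivAt (fun x => Real.log (r * cos x + Real.sqrt (1 - r ^ 2 * (sin x) ^ 2)))
      (-(r * sin φ) / Real.sqrt (1 - r ^ 2 * (sin φ) ^ 2)) φ := by
  set s := Real.sqrt (1 - r ^ 2 * (sin φ) ^ 2) with hs
  have hspos : 0 < s := sqrt_g_pos hr φ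
  have hpos : 0 < r * cos φ + s := by
    have : 0 ≤ r * cos φ := mul_nonneg hr.1.le hφ
    linarith
  have hinner : HasDerivAt (fun x => r * cos x + Real.sqrt (1 - r ^ 2 * (sin x) ^ 2))
      (r * (-sin φ) + -(r ^ 2 * sin φ * cos φ) / s) φ :=
    ((hasDerivAt_cos φ).const_mul r).add (hasDerivAt_sqrt_g hr φ)
  have := (Real.hasDerivAt_log hpos.ne').comp φ hinner
  refine this.congr_deriv ?_
  have hsq : s ^ 2 = 1 - r ^ 2 * (sin φ) ^ 2 := Real.sq_sqrt (g_pos hr φ).le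
  have h2 : s ≠ 0 := hspos.ne'
  have h3 : r * cos φ + s ≠ 0 := hpos.ne'
  field_simp
  nlinarith [hsq]

end aux

/-- An explicit logarithmic integral in terms of complete elliptic integrals. -/
theorem integral_cos_log_eq (r : ℝ) (hr : r ∈ Set.Ioo (0:ℝ) 1) :
    (∫ φ in (-(π/2))..(π/2),
        cos φ * Real.log (r * cos φ + Real.sqrt (1 - r ^ 2 * (sin φ) ^ 2)))
      = Real.log (1 - r ^ 2) + (2 / r) * (ellipticK r - ellipticE r) := by
  obtain ⟨hr0, hr1⟩ := hr
  have hrmem : r ∈ Set.Ioo (0:ℝ) 1 := ⟨hr0, hr1⟩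
  have h1r2 : (0:ℝ) < 1 - r ^ 2 := by nlinarith
  set L := fun x => Real.log (r * cos x + Real.sqrt (1 - r ^ 2 * (sin x) ^ 2)) with hL
  set f := fun x => (sin x) ^ 2 / Real.sqrt (1 - r ^ 2 * (sin x) ^ 2) with hf
  -- step 1: integration by parts
  have hcosnn : ∀ x ∈ Set.uIcc (-(π/2)) (π/2), 0 ≤ cos x := by
    intro x hx
    rw [Set.uIcc_of_le (by linarith [Real.pi_pos])] at hx
    exact Real.cos_nonneg_of_mem_Icc hx
  have hcontL : ContinuousOn L (Set.uIcc (-(π/2)) (π/2)) := by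
    apply ContinuousOn.log (by fun_prop)
    intro x hx
    have : 0 ≤ r * cos x := mul_nonneg hr0.le (hcosnn x hx)
    have := sqrt_g_pos hrmem x
    linarith
  have hibp : (∫ φ in (-(π/2))..(π/2), sin φ * ((-(r * sin φ)) / Real.sqrt (1 - r ^ 2 * (sin φ) ^ 2)))
      = sin (π/2) * L (π/2) - sin (-(π/2)) * L (-(π/2))
        - ∫ φ in (-(π/2))..(π/2), cos φ * L φ := by
    apply intervalIntegral.integral_mul_deriv_eq_deriv_mul_of_hasDerivAt
    · exact Real.continuous_sin.continuousOn
    · exact hcontL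
    · intro x _; exact hasDerivAt_sin x
    · intro x hx
      rw [min_eq_left (by linarith [Real.pi_pos] : -(π/2) ≤ π/2)] at hx
      rw [max_eq_right (by linarith [Real.pi_pos] : -(π/2) ≤ π/2)] at hx
      exact hasDerivAt_L hrmem x (Real.cos_nonneg_of_mem_Icc ⟨hx.1.le, hx.2.le⟩)
    · exact Real.continuous_cos.intervalIntegrable _ _
    · apply Continuous.intervalIntegrable
      apply Continuous.div (by fun_prop) (cont_sqrt_g hrmem)
      exact fun x => (sqrt_g_pos hrmem x).ne'
  -- boundary terms
  have hb : sin (π/2) * L (π/2) - sin (-(π/2)) * L (-(π/2)) = Real.log (1 - r ^ 2) := by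
    have h1 : L (π/2) = Real.log (Real.sqrt (1 - r ^ 2)) := by
      simp [hL, Real.cos_pi_div_two, Real.sin_pi_div_two]
    have h2 : L (-(π/2)) = Real.log (Real.sqrt (1 - r ^ 2)) := by
      simp [hL, Real.cos_pi_div_two, Real.sin_pi_div_two]
    rw [Real.sin_pi_div_two, Real.sin_neg, Real.sin_pi_div_two, h1, h2,
      Real.log_sqrt h1r2.le]
    ring
  -- rewrite the LHS of hibp
  have hlhs : (∫ φ in (-(π/2))..(π/2), sin φ * ((-(r * sin φ)) / Real.sqrt (1 - r ^ 2 * (sin φ) ^ 2)))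
      = -r * ∫ φ in (-(π/2))..(π/2), f φ := by
    rw [← intervalIntegral.integral_const_mul]
    congr 1
    ext x
    simp only [hf]
    ring
  -- evenness: ∫_{-a}^{a} f = 2 ∫_0^a f
  have heven : (∫ φ in (-(π/2))..(π/2), f φ) = 2 * ∫ φ in (0:ℝ)..(π/2), f φ := by
    have hsplit : (∫ φ in (-(π/2))..(π/2), f φ)
        = (∫ φ in (-(π/2))..(0:ℝ), f φ) + ∫ φ in (0:ℝ)..(π/2), f φ := by
      rw [intervalIntegral.integral_add_adjacent_intervals] <;>
        exact (cont_inner hrmem).intervalIntegrable _ _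
    have hneg : (∫ φ in (-(π/2))..(0:ℝ), f φ) = ∫ φ in (0:ℝ)..(π/2), f φ := by
      have := intervalIntegral.integral_comp_neg (a := (0:ℝ)) (b := π/2) (f := f)
      simp only [neg_zero] at this
      rw [← this]
      congr 1
      ext x
      simp [hf]
    rw [hsplit, hneg]; ring
  -- K - E = r^2 * ∫_0^{π/2} f
  have hKE : ellipticK r - ellipticE r = r ^ 2 * ∫ φ in (0:ℝ)..(π/2), f φ := by
    rw [ellipticK, ellipticE, ← intervalIntegral.integral_sub, ← intervalIntegral.integral_const_mul]
    · apply intervalIntegral.integral_congr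
      intro x _
      have hs : 0 < Real.sqrt (1 - r ^ 2 * (sin x) ^ 2) := sqrt_g_pos hrmem x
      have hsq : Real.sqrt (1 - r ^ 2 * (sin x) ^ 2) ^ 2 = 1 - r ^ 2 * (sin x) ^ 2 :=
        Real.sq_sqrt (g_pos hrmem x).le
      simp only [hf]
      field_simp
      nlinarith [hsq]
    · apply Continuous.intervalIntegrable
      apply Continuous.div continuous_const (cont_sqrt_g hrmem)
      exact fun x => (sqrt_g_pos hrmem x).ne'
    · exact (cont_sqrt_g hrmem).intervalIntegrable _ _
  -- combine
  have key : (∫ φ in (-(π/2))..(π/2), cos φ * L φ)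
      = Real.log (1 - r ^ 2) + r * ∫ φ in (-(π/2))..(π/2), f φ := by
    rw [hb, hlhs] at hibp
    linarith
  rw [show (∫ φ in (-(π/2))..(π/2),
        cos φ * Real.log (r * cos φ + Real.sqrt (1 - r ^ 2 * (sin φ) ^ 2)))
      = ∫ φ in (-(π/2))..(π/2), cos φ * L φ from rfl, key, heven, hKE]
  field_simp
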